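/- If M is a closed simply typed lambda-term of sort o that is not in beta-normal form and has complexity m (i.e., the maximal order of a subterm of M is m), then M contains a redex of order m, i.e., a subterm (λx.K) L with ord(λx.K) = m. -/

import Mathlib

namespace STLC

inductive Ty : Type
  | o : Ty
  | arrow : Ty → Ty → Ty

def ord : Ty → ℕ
  | .o => 0
  | .arrow α β => max (1 + ord α) (ord β)

/-- Intrinsically simply-typed lambda-terms in de Bruijn representation,
over the signature `a : o → o`, `b : o → o → o`, `e : o`. -/
inductive Tm : List Ty → Ty → Type
  | var {Γ} (i : Fin Γ.length) : Tm Γ (Γ.get i)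
  | ca {Γ} : Tm Γ (.arrow .o .o)
  | cb {Γ} : Tm Γ (.arrow .o (.arrow .o .o))
  | ce {Γ} : Tm Γ .o
  | lam {Γ γ δ} (K : Tm (γ :: Γ) δ) : Tm Γ (.arrow γ δ)
  | app {Γ γ δ} (K : Tm Γ (.arrow γ δ)) (L : Tm Γ γ) : Tm Γ δ

def IsLam : ∀ {Γ α}, Tm Γ α → Prop
  | _, _, .lam _ => True
  | _, _, _ => False

/-- Beta-normal form: no subterm `(λx.K) L`. -/
def Normal : ∀ {Γ α}, Tm Γ α → Prop
  | _, _, .app K L => Normal K ∧ Normal L ∧ ¬ IsLam K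
  | _, _, .lam K => Normal K
  | _, _, _ => True

/-- Complexity: the maximum of orders of subterms. -/
def complexity : ∀ {Γ α}, Tm Γ α → ℕ
  | Γ, _, .var i => ord (Γ.get i)
  | _, _, .ca => ord (Ty.arrow .o .o)
  | _, _, .cb => ord (Ty.arrow .o (.arrow .o .o))
  | _, _, .ce => ord Ty.o
  | _, _, .lam (γ := γ) (δ := δ) K => max (ord (.arrow γ δ)) (complexity K)
  | _, _, .app (δ := δ) K L => max (ord δ) (max (complexity K) (complexity L))

/-- The term contains a redex `(λx.K) L` of order `m`. -/
def HasRedexOfOrder (m : ℕ) : ∀ {Γ α}, Tm Γ α → Prop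
  | _, _, .app (γ := γ) (δ := δ) K L =>
      (IsLam K ∧ ord (.arrow γ δ) = m) ∨ HasRedexOfOrder m K ∨ HasRedexOfOrder m L
  | _, _, .lam K => HasRedexOfOrder m K
  | _, _, _ => False



theorem normal_app {Γ γ δ} (K : Tm Γ (.arrow γ δ)) (L : Tm Γ γ) :
    Normal (K.app L) ↔ Normal K ∧ Normal L ∧ ¬ IsLam K := Iff.rfl

theorem complexity_app {Γ γ δ} (K : Tm Γ (.arrow γ δ)) (L : Tm Γ γ) :
    complexity (K.app L) = max (ord δ) (max (complexity K) (complexity L)) := rfl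

theorem complexity_lam {Γ γ δ} (K : Tm (γ :: Γ) δ) :
    complexity K.lam = max (ord (.arrow γ δ)) (complexity K) := rfl

theorem complexity_var {Γ} (i : Fin (List.length Γ)) :
    complexity (Tm.var i) = ord (Γ.get i) := rfl

theorem redex_app {m : ℕ} {Γ γ δ} (K : Tm Γ (.arrow γ δ)) (L : Tm Γ γ) :
    HasRedexOfOrder m (K.app L) ↔
      ((IsLam K ∧ ord (.arrow γ δ) = m) ∨ HasRedexOfOrder m K ∨ HasRedexOfOrder m L) := Iff.rfl

theorem mem_of_get {Γ : List Ty} (i : Fin Γ.length) : Γ.get i ∈ Γ := List.get_mem Γ i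

theorem ord_arrow_pos (γ δ : Ty) : 1 ≤ ord (.arrow γ δ) :=
  le_max_of_le_left (by omega)

theorem ord_le_complexity : ∀ {Γ α} (M : Tm Γ α), ord α ≤ complexity M
  | _, _, .var _ => le_refl _
  | _, _, .ca => le_refl _
  | _, _, .cb => le_refl _
  | _, _, .ce => le_refl _
  | _, _, .lam _ => le_max_left _ _
  | _, _, .app _ _ => le_max_left _ _

theorem one_le_complexity_of_isLam :
    ∀ {Γ α} (M : Tm Γ α), IsLam M → 1 ≤ complexity M
  | _, _, .lam _, _ => le_max_of_le_left (ord_arrow_pos _ _)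
  | _, _, .var _, h => h.elim
  | _, _, .ca, h => h.elim
  | _, _, .cb, h => h.elim
  | _, _, .ce, h => h.elim
  | _, _, .app _ _, h => h.elim

theorem one_le_complexity_of_not_normal :
    ∀ {Γ α} (M : Tm Γ α), ¬ Normal M → 1 ≤ complexity M
  | _, _, .var _, h => absurd trivial h
  | _, _, .ca, h => absurd trivial h
  | _, _, .cb, h => absurd trivial h
  | _, _, .ce, h => absurd trivial h
  | _, _, .lam _, _ => le_max_of_le_left (ord_arrow_pos _ _)
  | _, _, .app K L, h => by
      rw [normal_app, not_and_or, not_and_or, not_not] at h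
      rw [← or_assoc, or_comm] at h
      rcases h with h | h | h
      · exact le_trans (one_le_complexity_of_isLam K h)
          (le_max_of_le_right (le_max_left _ _))
      · exact le_trans (one_le_complexity_of_not_normal K h)
          (le_max_of_le_right (le_max_left _ _))
      · exact le_trans (one_le_complexity_of_not_normal L h)
          (le_max_of_le_right (le_max_right _ _))

theorem hasRedex_one_of_not_normal :
    ∀ {Γ α} (M : Tm Γ α), complexity M ≤ 1 → ¬ Normal M → HasRedexOfOrder 1 M
  | _, _, .var _, _, h => absurd trivial h
  | _, _, .ca, _, h => absurd trivial h
  | _, _, .cb, _, h => absurd trivial h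
  | _, _, .ce, _, h => absurd trivial h
  | _, _, .lam K, hc, h =>
      hasRedex_one_of_not_normal K (le_trans (le_max_right _ _) hc) h
  | _, _, .app (γ := γ) (δ := δ) K L, hc, h => by
      rw [normal_app, not_and_or, not_and_or, not_not] at h
      rw [← or_assoc, or_comm] at h
      have hcK : complexity K ≤ 1 :=
        le_trans (le_max_of_le_right (le_max_left _ _)) hc
      have hcL : complexity L ≤ 1 :=
        le_trans (le_max_of_le_right (le_max_right _ _)) hc
      rcases h with h | h | h
      · exact Or.inl ⟨h, le_antisymm (le_trans (ord_le_complexity K) hcK)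
          (ord_arrow_pos _ _)⟩
      · exact Or.inr (Or.inl (hasRedex_one_of_not_normal K hcK h))
      · exact Or.inr (Or.inr (hasRedex_one_of_not_normal L hcL h))

theorem lam_or_redex :
    ∀ {Γ α} (M : Tm Γ α) (m : ℕ), 2 ≤ m → (∀ γ ∈ Γ, ord γ < m) →
      complexity M ≤ m → ord α = m → IsLam M ∨ HasRedexOfOrder m M
  | Γ, _, .var i, m, _, hΓ, _, ha => by
      have := hΓ _ (mem_of_get i)
      omega
  | _, _, .ca, m, hm, _, _, ha => by simp [ord] at ha; omega
  | _, _, .cb, m, hm, _, _, ha => by simp [ord] at ha; omega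
  | _, _, .ce, m, hm, _, _, ha => by simp [ord] at ha; omega
  | _, _, .lam _, _, _, _, _, _ => Or.inl trivial
  | _, _, .app (γ := γ) (δ := δ) K L, m, hm, hΓ, hc, ha => by
      have hcK : complexity K ≤ m :=
        le_trans (le_max_of_le_right (le_max_left _ _)) hc
      have h1 : ord (.arrow γ δ) ≤ m := le_trans (ord_le_complexity K) hcK
      have h2 : ord (.arrow γ δ) = m := by
        have : ord δ ≤ ord (.arrow γ δ) := le_max_right _ _
        omega
      rcases lam_or_redex K m hm hΓ hcK h2 with h | h
      · exact Or.inr (Or.inl ⟨h, h2⟩)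
      · exact Or.inr (Or.inr (Or.inl h))

theorem hasRedex_of_complexity_eq :
    ∀ {Γ α} (M : Tm Γ α) (m : ℕ), 2 ≤ m → (∀ γ ∈ Γ, ord γ < m) →
      ord α < m → complexity M = m → HasRedexOfOrder m M
  | Γ, _, .var i, m, _, hΓ, _, hc => by
      have := hΓ _ (mem_of_get i)
      rw [complexity_var] at hc
      omega
  | _, _, .ca, m, hm, _, _, hc => by simp [complexity, ord] at hc; omega
  | _, _, .cb, m, hm, _, _, hc => by simp [complexity, ord] at hc; omega
  | _, _, .ce, m, hm, _, _, hc => by simp [complexity, ord] at hc; omega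
  | _, _, .lam (γ := γ) (δ := δ) K, m, hm, hΓ, ha, hc => by
      have hγ : 1 + ord γ ≤ ord (.arrow γ δ) := le_max_left _ _
      have hδ : ord δ ≤ ord (.arrow γ δ) := le_max_right _ _
      have hcK : complexity K = m := by
        rw [complexity_lam] at hc
        omega
      exact hasRedex_of_complexity_eq K m hm
        (by
          intro γ' hγ'
          rcases List.mem_cons.mp hγ' with h | h
          · subst h; omega
          · exact hΓ _ h)
        (by omega) hcK
  | _, _, .app (γ := γ) (δ := δ) K L, m, hm, hΓ, ha, hc => by
      rw [complexity_app] at hc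
      have hcK : complexity K ≤ m := le_trans (le_max_of_le_right (le_max_left _ _)) hc.le
      have hcL : complexity L ≤ m := le_trans (le_max_of_le_right (le_max_right _ _)) hc.le
      by_cases harr : ord (.arrow γ δ) = m
      · rcases lam_or_redex K m hm hΓ hcK harr with h | h
        · exact Or.inl ⟨h, harr⟩
        · exact Or.inr (Or.inl h)
      · have harr' : ord (.arrow γ δ) < m :=
          lt_of_le_of_ne (le_trans (ord_le_complexity K) hcK) harr
        have hγ : 1 + ord γ ≤ ord (.arrow γ δ) := le_max_left _ _
        have hmax : max (complexity K) (complexity L) = m := by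
          have := hc.le
          have h2 : m ≤ max (ord δ) (max (complexity K) (complexity L)) := hc.ge
          rcases max_cases (ord δ) (max (complexity K) (complexity L)) with ⟨he, _⟩ | ⟨he, _⟩ <;> omega
        rcases le_total (complexity K) (complexity L) with hle | hle
        · rw [max_eq_right hle] at hmax
          exact Or.inr (Or.inr (hasRedex_of_complexity_eq L m hm hΓ (by omega) hmax))
        · rw [max_eq_left hle] at hmax
          exact Or.inr (Or.inl (hasRedex_of_complexity_eq K m hm hΓ (by omega) hmax))

/-- If `M` is a closed term of sort `o`, not in beta-normal form, of complexity `m`,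
then `M` contains a redex of order `m`. -/
theorem exists_redex_of_max_order (M : Tm [] .o) (m : ℕ)
    (hM : ¬ Normal M) (hc : complexity M = m) :
    HasRedexOfOrder m M := by
  have h1 := one_le_complexity_of_not_normal M hM
  match m, hc with
  | m, hc =>
    rcases Nat.lt_or_ge m 2 with hm | hm
    · interval_cases m
      · omega
      · exact hasRedex_one_of_not_normal M hc.le hM
    · exact hasRedex_of_complexity_eq M m hm (by simp) (by simp [ord]; omega) hc

end STLC
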